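/- arXiv:math/0601172 — 4 statements merged into one kernel-verified Lean document; each statement's English description precedes it below -/
import Mathlib

section
/- Every connected finite graph G has a connected dominating set D and an independent set S with S ⊆ D such that |D| = 2|S| - 1. -/
open SimpleGraph

/-- A set of vertices is independent: no two of its vertices are adjacent. -/
def IsIndepSet {V : Type*} (G : SimpleGraph V) (s : Set V) : Prop :=
  s.Pairwise fun a b => ¬ G.Adj a b

/-- The independence number of a graph. -/
noncomputable def indepNum {V : Type*} [Fintype V] (G : SimpleGraph V) : ℕ :=
  sSup {n | ∃ s : Finset V, _root_.IsIndepSet G ↑s ∧ s.card = n}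

/-- A set of vertices is connected if it induces a connected subgraph. -/
def IsConnSet {V : Type*} (G : SimpleGraph V) (s : Set V) : Prop :=
  (G.induce s).Connected

/-- A set of vertices is dominating if every vertex outside it has a neighbour in it. -/
def IsDomSet {V : Type*} (G : SimpleGraph V) (s : Set V) : Prop :=
  ∀ v ∉ s, ∃ u ∈ s, G.Adj u v

/-- `G` has a `K_n`-minor, witnessed by `n` pairwise disjoint nonempty connected
branch sets with an edge between each pair. -/
def HasCliqueMinor {V : Type*} (G : SimpleGraph V) (n : ℕ) : Prop :=
  ∃ B : Fin n → Set V,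
    (∀ i, (B i).Nonempty) ∧
    (∀ i, IsConnSet G (B i)) ∧
    (Pairwise fun i j => Disjoint (B i) (B j)) ∧
    (Pairwise fun i j => ∃ u ∈ B i, ∃ v ∈ B j, G.Adj u v)

/-- The Hadwiger number: the largest `n` such that `K_n` is a minor of `G`. -/
noncomputable def hadwigerNum {V : Type*} [Fintype V] (G : SimpleGraph V) : ℕ :=
  sSup {n | HasCliqueMinor G n}

lemma isConnSet_singleton {V : Type*} (G : SimpleGraph V) (v : V) :
    IsConnSet G {v} := by
  haveI : Nonempty ({v} : Set V) := ⟨⟨v, rfl⟩⟩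
  refine SimpleGraph.Connected.mk fun a b => ?_
  have : a = b := Subtype.ext (a.2.trans b.2.symm)
  exact this ▸ Reachable.refl _

lemma isConnSet_insert {V : Type*} {G : SimpleGraph V} {s : Set V} {u v : V}
    (hu : u ∈ s) (hadj : G.Adj u v) (hs : IsConnSet G s) : IsConnSet G (insert v s) := by
  have := G.connected_induce_union (Connected.preconnected hs) (Connected.preconnected (isConnSet_singleton G v)) hu (Set.mem_singleton v) hadj
  rwa [Set.union_singleton] at this

/-- The finset of vertices not dominated by `D` (and not in `D`). -/
noncomputable def undom {V : Type*} [Fintype V] (G : SimpleGraph V) (D : Finset V) : Finset V :=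
  (Set.toFinite {v : V | v ∉ D ∧ ¬ ∃ u ∈ D, G.Adj u v}).toFinset

lemma mem_undom {V : Type*} [Fintype V] {G : SimpleGraph V} {D : Finset V} {v : V} :
    v ∈ undom G D ↔ v ∉ D ∧ ¬ ∃ u ∈ D, G.Adj u v := by
  simp [undom]

lemma key {V : Type*} [Fintype V] (G : SimpleGraph V) (hG : G.Connected) :
    ∀ n : ℕ, ∀ D S : Finset V, S.Nonempty → S ⊆ D → IsConnSet G ↑D → _root_.IsIndepSet G ↑S →
      D.card = 2 * S.card - 1 → (undom G D).card ≤ n →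
      ∃ D' S' : Finset V, S' ⊆ D' ∧ IsConnSet G ↑D' ∧ IsDomSet G ↑D' ∧
        _root_.IsIndepSet G ↑S' ∧ D'.card = 2 * S'.card - 1 := by
  classical
  intro n
  induction n with
  | zero =>
    intro D S _ hSD hconn hind hcard hle
    refine ⟨D, S, hSD, hconn, ?_, hind, hcard⟩
    intro v hv
    by_contra h
    push_neg at h
    have : v ∈ undom G D := mem_undom.mpr ⟨hv, by push_neg; exact h⟩
    simp [Finset.card_eq_zero.mp (Nat.le_zero.mp hle)] at this
  | succ n ih =>
    intro D S hSne hSD hconn hind hcard hle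
    by_cases hU : undom G D = ∅
    · exact ih D S hSne hSD hconn hind hcard (by simp [hU])
    · have hUne : (undom G D).Nonempty := Finset.nonempty_iff_ne_empty.mpr hU
      have hDne : D.Nonempty := hSne.mono hSD
      -- f v = min distance from v to D
      set f : V → ℕ := fun x => D.inf' hDne (G.dist x) with hf
      obtain ⟨v, hvU, hvmin⟩ := (undom G D).exists_min_image f hUne
      obtain ⟨hvD, hvadj⟩ := mem_undom.mp hvU
      obtain ⟨d, hdD, hdist⟩ := Finset.exists_mem_eq_inf' hDne (G.dist v)
      have hd2 : 2 ≤ G.dist v d := by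
        rcases Nat.lt_or_ge (G.dist v d) 2 with h | h
        · interval_cases h' : G.dist v d
          · exact absurd ((hG.dist_eq_zero_iff).mp h') (fun e => hvD (e ▸ hdD))
          · exact absurd ⟨d, hdD, (dist_eq_one_iff_adj.mp h').symm⟩ hvadj
        · exact h
      obtain ⟨p, hp⟩ := (hG v d).exists_walk_length_eq_dist
      -- p has length ≥ 2, take its second vertex w
      obtain ⟨w, hvw, q, rfl⟩ : ∃ w, ∃ _ : G.Adj v w, ∃ q : G.Walk w d, p = Walk.cons ‹_› q := by
        cases p with
        | nil => simp at hp; rw [SimpleGraph.dist_self] at hd2; omega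
        | cons h q => exact ⟨_, h, q, rfl⟩
      have hqlen : q.length = G.dist v d - 1 := by
        simp [Walk.length_cons] at hp; omega
      have hwD : w ∉ D := fun hw => hvadj ⟨w, hw, hvw.symm⟩
      have hwdom : ∃ u ∈ D, G.Adj u w := by
        by_contra h
        have hwU : w ∈ undom G D := mem_undom.mpr ⟨hwD, h⟩
        have h1 : f w ≤ G.dist w d := Finset.inf'_le _ hdD
        have h2 : G.dist w d ≤ q.length := dist_le q
        have h3 : f v ≤ f w := hvmin w hwU
        have hfv : f v = G.dist v d := hdist
        omega
      obtain ⟨u, huD, huw⟩ := hwdom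
      have hvw' : v ∉ insert w D := by
        simp only [Finset.mem_insert]
        rintro (rfl | h)
        · exact G.irrefl hvw
        · exact hvD h
      have hvS : v ∉ S := fun h => hvD (hSD h)
      refine ih (insert v (insert w D)) (insert v S) ⟨v, Finset.mem_insert_self _ _⟩
        ?_ ?_ ?_ ?_ ?_
      · exact Finset.insert_subset_insert _ (hSD.trans (Finset.subset_insert _ _))
      · push_cast
        exact isConnSet_insert (Set.mem_insert w _)
          hvw.symm (isConnSet_insert (by exact_mod_cast huD) huw hconn)
      · push_cast
        refine Set.pairwise_insert.mpr ⟨hind, fun b hb _ => ?_⟩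
        have hbD : b ∈ D := hSD (by exact_mod_cast hb)
        exact ⟨fun h => hvadj ⟨b, hbD, h.symm⟩, fun h => hvadj ⟨b, hbD, h⟩⟩
      · rw [Finset.card_insert_of_notMem hvw', Finset.card_insert_of_notMem hwD,
          Finset.card_insert_of_notMem hvS]
        have := Finset.card_pos.mpr hSne
        omega
      · have hsub : undom G (insert v (insert w D)) ⊆ undom G D := by
          intro x hx
          obtain ⟨hx1, hx2⟩ := mem_undom.mp hx
          refine mem_undom.mpr ⟨fun h => hx1 (by simp [h]), fun ⟨u', hu', ha⟩ =>
            hx2 ⟨u', by simp [hu'], ha⟩⟩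
        have hne : v ∈ undom G D ∧ v ∉ undom G (insert v (insert w D)) := by
          refine ⟨hvU, fun h => (mem_undom.mp h).1 (Finset.mem_insert_self _ _)⟩
        have : undom G (insert v (insert w D)) ⊂ undom G D :=
          ⟨hsub, fun h => hne.2 (h hne.1)⟩
        have := Finset.card_lt_card this
        omega

theorem stmt_0 {V : Type*} [Fintype V] (G : SimpleGraph V) (hG : G.Connected) :
    ∃ D S : Finset V, S ⊆ D ∧ IsConnSet G ↑D ∧ IsDomSet G ↑D ∧
      _root_.IsIndepSet G ↑S ∧ D.card = 2 * S.card - 1 := by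
  have : Nonempty V := hG.nonempty
  obtain ⟨v⟩ := this
  classical
  refine key G hG (undom G {v}).card {v} {v} ⟨v, Finset.mem_singleton_self v⟩ le_rfl ?_ ?_ (by simp) le_rfl
  · simpa using isConnSet_singleton G v
  · simp [_root_.IsIndepSet]
end

section
/- Suppose t ≥ 1 is an integer and p ≥ t is a real number such that every finite graph H with Hadwiger number η(H) ≤ t satisfies p·α(H) ≥ |V(H)|. Then every finite graph G with η(G) ≥ t satisfies α(G) ≥ (2|V(G)| − p)/(4η(G) + 2p − 4t) + 1/2. -/
open SimpleGraph

set_option linter.unusedSectionVars false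
set_option linter.unusedVariables false

namespace HadAux

/-! ### generic `_root_.indepNum`/`hadwigerNum` facts -/

section generic
variable {W : Type*} [Fintype W] {H : SimpleGraph W}

lemma indepNum_bdd : BddAbove {n | ∃ s : Finset W, _root_.IsIndepSet H ↑s ∧ s.card = n} :=
  ⟨Fintype.card W, fun n hn => by obtain ⟨a, -, hc⟩ := hn; exact hc ▸ a.card_le_univ⟩

lemma indepNum_spec : ∃ b : Finset W, _root_.IsIndepSet H ↑b ∧ b.card = _root_.indepNum H :=
  Nat.sSup_mem ⟨0, by exact ⟨∅, by simp [_root_.IsIndepSet], rfl⟩⟩ indepNum_bdd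

lemma le_indepNum {b : Finset W} (h : _root_.IsIndepSet H ↑b) : b.card ≤ _root_.indepNum H :=
  le_csSup indepNum_bdd ⟨b, h, rfl⟩

lemma hasCliqueMinor_le_card {n : ℕ} (h : HasCliqueMinor H n) : n ≤ Fintype.card W := by
  obtain ⟨B, hne, -, hdisj, -⟩ := h
  have : Function.Injective (fun i => (hne i).choose) := by
    intro i j hij
    by_contra hne'
    have hij' : (hne i).choose = (hne j).choose := hij
    have h1 : (hne i).choose ∈ B i := (hne i).choose_spec
    rw [hij'] at h1
    exact Set.disjoint_left.mp (hdisj hne') h1 (hne j).choose_spec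
  simpa using Fintype.card_le_of_injective _ this

lemma hasCliqueMinor_zero : HasCliqueMinor H 0 :=
  ⟨fun i => i.elim0, fun i => i.elim0, fun i => i.elim0, fun i => i.elim0, fun i => i.elim0⟩

lemma hadwigerNum_spec : HasCliqueMinor H (hadwigerNum H) :=
  Nat.sSup_mem ⟨0, by exact hasCliqueMinor_zero⟩
    ⟨Fintype.card W, fun _ h => hasCliqueMinor_le_card h⟩

lemma le_hadwigerNum {n : ℕ} (h : HasCliqueMinor H n) : n ≤ hadwigerNum H :=
  le_csSup ⟨Fintype.card W, fun _ h => hasCliqueMinor_le_card h⟩ (by exact h)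

end generic

/-! ### relative versions inside an ambient graph -/

variable {V : Type} [Fintype V] (G : SimpleGraph V)

/-- independence number within a vertex set, measured in the ambient graph -/
noncomputable def aN (s : Set V) : ℕ :=
  sSup {n | ∃ a : Finset V, ↑a ⊆ s ∧ _root_.IsIndepSet G ↑a ∧ a.card = n}

/-- clique minor with all branch sets inside `s` -/
def HasCMOn (s : Set V) (n : ℕ) : Prop :=
  ∃ B : Fin n → Set V,
    (∀ i, B i ⊆ s) ∧
    (∀ i, (B i).Nonempty) ∧
    (∀ i, IsConnSet G (B i)) ∧
    (Pairwise fun i j => Disjoint (B i) (B j)) ∧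
    (Pairwise fun i j => ∃ u ∈ B i, ∃ v ∈ B j, G.Adj u v)

noncomputable def eN (s : Set V) : ℕ := sSup {n | HasCMOn G s n}

variable {G}

lemma aN_set_bdd (s : Set V) :
    BddAbove {n | ∃ a : Finset V, ↑a ⊆ s ∧ _root_.IsIndepSet G ↑a ∧ a.card = n} :=
  ⟨Fintype.card V, fun n hn => by obtain ⟨a, -, -, hc⟩ := hn; exact hc ▸ a.card_le_univ⟩

lemma aN_spec (s : Set V) : ∃ a : Finset V, ↑a ⊆ s ∧ _root_.IsIndepSet G ↑a ∧ a.card = aN G s :=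
  Nat.sSup_mem ⟨0, by exact ⟨∅, by simp, by simp [_root_.IsIndepSet], rfl⟩⟩ (aN_set_bdd s)

lemma le_aN {s : Set V} {a : Finset V} (h1 : ↑a ⊆ s) (h2 : _root_.IsIndepSet G ↑a) :
    a.card ≤ aN G s :=
  le_csSup (aN_set_bdd s) ⟨a, h1, h2, rfl⟩

lemma aN_mono {s s' : Set V} (h : s ⊆ s') : aN G s ≤ aN G s' := by
  obtain ⟨a, h1, h2, h3⟩ := aN_spec (G := G) s
  exact h3 ▸ le_aN (h1.trans h) h2

lemma one_le_aN {s : Set V} {v : V} (hv : v ∈ s) : 1 ≤ aN G s := by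
  have := le_aN (G := G) (a := {v}) (by simpa using hv) (by simp [_root_.IsIndepSet])
  simpa using this

lemma hasCMOn_zero (s : Set V) : HasCMOn G s 0 :=
  ⟨fun i => i.elim0, fun i => i.elim0, fun i => i.elim0, fun i => i.elim0,
   fun i => i.elim0, fun i => i.elim0⟩

lemma HasCMOn.le_card {s : Set V} {n : ℕ} (h : HasCMOn G s n) : n ≤ Fintype.card V := by
  obtain ⟨B, -, hne, -, hdisj, -⟩ := h
  have : Function.Injective (fun i => (hne i).choose) := by
    intro i j hij
    by_contra hne'
    have hij' : (hne i).choose = (hne j).choose := hij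
    have h1 : (hne i).choose ∈ B i := (hne i).choose_spec
    rw [hij'] at h1
    exact Set.disjoint_left.mp (hdisj hne') h1 (hne j).choose_spec
  simpa using Fintype.card_le_of_injective _ this

lemma eN_spec (s : Set V) : HasCMOn G s (eN G s) :=
  Nat.sSup_mem ⟨0, by exact hasCMOn_zero s⟩
    ⟨Fintype.card V, fun _ h => HasCMOn.le_card h⟩

lemma le_eN {s : Set V} {n : ℕ} (h : HasCMOn G s n) : n ≤ eN G s :=
  le_csSup ⟨Fintype.card V, fun _ h => HasCMOn.le_card h⟩ (by exact h)

lemma eN_mono {s s' : Set V} (h : s ⊆ s') : eN G s ≤ eN G s' := by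
  obtain ⟨B, h1, h2, h3, h4, h5⟩ := eN_spec (G := G) s
  exact le_eN ⟨B, fun i => (h1 i).trans h, h2, h3, h4, h5⟩

/-! ### connectivity toolkit -/

lemma isConnSet_singleton (v : V) : IsConnSet G {v} := by
  unfold IsConnSet
  rw [induce_singleton_eq_top]
  exact ⟨fun a b => by rw [Subsingleton.elim a b]⟩

lemma isConnSet_insert {C : Set V} {u v : V} (hu : u ∈ C) (hC : IsConnSet G C)
    (ha : G.Adj u v) : IsConnSet G (insert v C) := by
  have h : insert v C = {u, v} ∪ C := by
    ext x
    simp only [Set.mem_insert_iff, Set.mem_union, Set.mem_singleton_iff]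
    constructor
    · rintro (rfl | h)
      · exact Or.inl (Or.inr rfl)
      · exact Or.inr h
    · rintro ((rfl | rfl) | h)
      · exact Or.inr hu
      · exact Or.inl rfl
      · exact Or.inr h
  unfold IsConnSet at *
  rw [h]
  exact induce_union_connected (induce_pair_connected_of_adj ha).preconnected hC.preconnected ⟨u, by simp [hu]⟩

lemma walk_find {s : Set V} (Q : V → Prop) {x y : ↥s} (w : (G.induce s).Walk x y)
    (hx : ¬ Q ↑x) (hy : Q ↑y) :
    ∃ a b : V, a ∈ s ∧ b ∈ s ∧ ¬ Q a ∧ Q b ∧ G.Adj a b := by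
  induction w with
  | nil => exact absurd hy hx
  | @cons u v z h p ih =>
    by_cases hQ : Q ↑v
    · exact ⟨↑u, ↑v, u.2, v.2, hx, hQ, h⟩
    · exact ih hQ hy

lemma exists_split {s : Set V} (hne : s.Nonempty) (h : ¬ IsConnSet G s) :
    ∃ s₁ s₂ : Set V, s₁.Nonempty ∧ s₂.Nonempty ∧ s₁ ∪ s₂ = s ∧ Disjoint s₁ s₂ ∧
      ∀ a ∈ s₁, ∀ b ∈ s₂, ¬ G.Adj a b := by
  unfold IsConnSet at h
  rw [connected_iff] at h
  push_neg at h
  have hne' : Nonempty ↥s := hne.to_subtype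
  obtain ⟨x, y, hxy⟩ : ∃ x y : ↥s, ¬ (G.induce s).Reachable x y := by
    by_contra hc
    push_neg at hc
    exact (h (fun a b => hc a b)).false hne'.some
  refine ⟨{v | ∃ h : v ∈ s, (G.induce s).Reachable x ⟨v, h⟩},
          {v | ∃ h : v ∈ s, ¬ (G.induce s).Reachable x ⟨v, h⟩},
          ⟨↑x, x.2, by simpa using Reachable.refl x⟩,
          ⟨↑y, y.2, by simpa using hxy⟩, ?_, ?_, ?_⟩
  · ext v
    simp only [Set.mem_union, Set.mem_setOf_eq]
    constructor
    · rintro (⟨h1, -⟩ | ⟨h1, -⟩) <;> exact h1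
    · intro hv
      by_cases hr : (G.induce s).Reachable x ⟨v, hv⟩
      · exact Or.inl ⟨hv, hr⟩
      · exact Or.inr ⟨hv, hr⟩
  · rw [Set.disjoint_left]
    rintro v ⟨h1, h2⟩ ⟨h3, h4⟩
    exact h4 h2
  · rintro a ⟨ha, hra⟩ b ⟨hb, hrb⟩ hadj
    exact hrb (hra.trans (Adj.reachable (by exact hadj : (G.induce s).Adj ⟨a, ha⟩ ⟨b, hb⟩)))

/-! ### transfer between induced subgraph and ambient data -/

noncomputable def induceIso (G : SimpleGraph V) (s : Set V) (B : Set ↥s) :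
    (G.induce s).induce B ≃g G.induce (Subtype.val '' B) where
  toEquiv := (Equiv.Set.image Subtype.val B Subtype.val_injective)
  map_rel_iff' := by intro x y; simp [Equiv.Set.image, Equiv.Set.imageOfInjOn]

lemma isConnSet_image {s : Set V} {B : Set ↥s} :
    IsConnSet (G.induce s) B ↔ IsConnSet G (Subtype.val '' B) :=
  (induceIso G s B).connected_iff

lemma hasCliqueMinor_induce_iff {s : Set V} {n : ℕ} :
    HasCliqueMinor (G.induce s) n ↔ HasCMOn G s n := by
  constructor
  · rintro ⟨B, hne, hconn, hdisj, hadj⟩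
    refine ⟨fun i => Subtype.val '' B i, ?_, ?_, ?_, ?_, ?_⟩
    · rintro i x ⟨y, -, rfl⟩; exact y.2
    · exact fun i => (hne i).image _
    · exact fun i => isConnSet_image.mp (hconn i)
    · intro i j hij
      rw [Set.disjoint_left]
      rintro x ⟨y, hy, rfl⟩ ⟨z, hz, hzy⟩
      rw [Subtype.val_injective hzy] at hz
      exact Set.disjoint_left.mp (hdisj hij) hy hz
    · intro i j hij
      obtain ⟨u, hu, v, hv, huv⟩ := hadj hij
      exact ⟨↑u, Set.mem_image_of_mem _ hu, ↑v, Set.mem_image_of_mem _ hv, huv⟩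
  · rintro ⟨B, hsub, hne, hconn, hdisj, hadj⟩
    refine ⟨fun i => Subtype.val ⁻¹' B i, ?_, ?_, ?_, ?_⟩
    · intro i
      obtain ⟨x, hx⟩ := hne i
      exact ⟨⟨x, hsub i hx⟩, hx⟩
    · intro i
      have himg : Subtype.val '' (Subtype.val ⁻¹' B i : Set ↥s) = B i := by
        rw [Subtype.image_preimage_coe]
        exact Set.inter_eq_self_of_subset_right (hsub i)
      have := isConnSet_image (G := G) (s := s) (B := Subtype.val ⁻¹' B i)
      rw [himg] at this
      exact this.mpr (hconn i)
    · intro i j hij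
      rw [Set.disjoint_left]
      rintro x hx hx'
      exact Set.disjoint_left.mp (hdisj hij) hx hx'
    · intro i j hij
      obtain ⟨u, hu, v, hv, huv⟩ := hadj hij
      exact ⟨⟨u, hsub i hu⟩, hu, ⟨v, hsub j hv⟩, hv, huv⟩

lemma hadwigerNum_induce (s : Set V) [Fintype ↥s] :
    hadwigerNum (G.induce s) = eN G s := by
  unfold hadwigerNum eN
  congr 1
  ext n
  exact hasCliqueMinor_induce_iff

lemma indepNum_induce (s : Set V) [Fintype ↥s] :
    _root_.indepNum (G.induce s) = aN G s := by
  apply le_antisymm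
  · obtain ⟨b, hb, hbc⟩ := indepNum_spec (H := G.induce s)
    rw [← hbc]
    classical
    have : ∃ a : Finset V, ↑a ⊆ s ∧ _root_.IsIndepSet G ↑a ∧ a.card = b.card := by
      refine ⟨b.image Subtype.val, ?_, ?_, ?_⟩
      · intro x hx
        simp only [Finset.coe_image, Set.mem_image, Finset.mem_coe] at hx
        obtain ⟨y, -, rfl⟩ := hx
        exact y.2
      · rintro x hx y hy hxy hadj
        simp only [Finset.coe_image, Set.mem_image, Finset.mem_coe] at hx hy
        obtain ⟨x', hx', rfl⟩ := hx
        obtain ⟨y', hy', rfl⟩ := hy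
        exact hb hx' hy' (fun h => hxy (congrArg Subtype.val h)) hadj
      · exact Finset.card_image_of_injective _ Subtype.val_injective
    obtain ⟨a, h1, h2, h3⟩ := this
    exact h3 ▸ le_aN h1 h2
  · obtain ⟨a, hsub, hind, hac⟩ := aN_spec (G := G) s
    rw [← hac]
    classical
    have : ∃ b : Finset ↥s, _root_.IsIndepSet (G.induce s) ↑b ∧ b.card = a.card := by
      refine ⟨a.attach.image (fun x => (⟨x.1, hsub x.2⟩ : ↥s)), ?_, ?_⟩
      · rintro x hx y hy hxy hadj
        simp only [Finset.coe_image, Set.mem_image, Finset.mem_coe, Finset.mem_attach] at hx hy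
        obtain ⟨x', -, rfl⟩ := hx
        obtain ⟨y', -, rfl⟩ := hy
        exact hind x'.2 y'.2 (fun h => hxy (by simp [Subtype.ext_iff, h])) hadj
      · rw [Finset.card_image_of_injective, Finset.card_attach]
        intro x y h
        have h2 : (⟨(x : V), hsub x.2⟩ : ↥s) = ⟨(y : V), hsub y.2⟩ := h
        exact Subtype.ext (by simpa using h2)
    obtain ⟨b, h1, h2⟩ := this
    exact h2 ▸ le_indepNum h1

lemma eN_univ : eN G Set.univ = hadwigerNum G := by
  unfold hadwigerNum eN
  congr 1
  ext n
  constructor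
  · rintro ⟨B, -, h2, h3, h4, h5⟩
    exact ⟨B, h2, h3, h4, h5⟩
  · rintro ⟨B, h2, h3, h4, h5⟩
    exact ⟨B, fun i => Set.subset_univ _, h2, h3, h4, h5⟩

lemma aN_univ : aN G Set.univ = _root_.indepNum G := by
  unfold _root_.indepNum aN
  congr 1
  ext n
  constructor
  · rintro ⟨a, -, h2, h3⟩
    exact ⟨a, h2, h3⟩
  · rintro ⟨a, h2, h3⟩
    exact ⟨a, Set.subset_univ _, h2, h3⟩

section DM
open Finset in
lemma exists_cds {s : Finset V} (hne : s.Nonempty) (hconn : IsConnSet G ↑s) :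
    ∃ D : Finset V, D ⊆ s ∧ D.Nonempty ∧ IsConnSet G ↑D ∧
      (∀ v ∈ s, v ∉ D → ∃ u ∈ D, G.Adj u v) ∧ D.card < 2 * aN G ↑s := by
  classical
  set P : ℕ → Prop := fun k => ∃ C I : Finset V, I ⊆ C ∧ C ⊆ s ∧ _root_.IsIndepSet G ↑I ∧
    IsConnSet G ↑C ∧ C.card < 2 * I.card ∧ I.card = k with hP
  obtain ⟨v, hv⟩ := hne
  have hP1 : P 1 := by
    refine ⟨{v}, {v}, le_refl _, by simpa using hv, by simp [_root_.IsIndepSet], ?_, by simp, by simp⟩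
    · have := isConnSet_singleton (G := G) v
      simpa using this
  have hbdd : BddAbove {k | P k} := by
    refine ⟨s.card, fun k hk => ?_⟩
    obtain ⟨C, I, hIC, hCs, -, -, -, hk⟩ := hk
    exact hk ▸ Finset.card_le_card (hIC.trans hCs)
  have hmem := Nat.sSup_mem ⟨1, hP1⟩ hbdd
  set K := sSup {k | P k} with hK
  have hK1 : 1 ≤ K := le_csSup hbdd hP1
  have hKmax : ¬ P (K + 1) := by
    intro h
    have := le_csSup hbdd h
    omega
  obtain ⟨C, I, hIC, hCs, hIind, hCconn, hcard, hIcard⟩ := hmem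
  have hIne : I.Nonempty := Finset.card_pos.mp (by omega)
  have hCne : C.Nonempty := hIne.mono hIC
  refine ⟨C, hCs, hCne, hCconn, ?_, ?_⟩
  · -- dominating
    by_contra hdom
    push_neg at hdom
    obtain ⟨v₀, hv₀s, hv₀C, hv₀n⟩ := hdom
    set Cl : Set V := ↑C ∪ {w | ∃ c ∈ C, G.Adj c w} with hCl
    have hv₀Cl : v₀ ∉ Cl := by
      rintro (h | ⟨c, hc, hadj⟩)
      · exact hv₀C h
      · exact (hv₀n c hc) hadj
    obtain ⟨c₀, hc₀⟩ := hCne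
    obtain ⟨w⟩ := hconn.preconnected ⟨v₀, by simpa using hv₀s⟩ ⟨c₀, by simpa using hCs hc₀⟩
    obtain ⟨a, b, has, hbs, haCl, hbCl, hab⟩ :=
      walk_find (Q := (· ∈ Cl)) w hv₀Cl (Or.inl (by simpa using hc₀))
    have hbC : b ∉ C := fun h => haCl (Or.inr ⟨b, h, hab.symm⟩)
    obtain ⟨c, hcC, hcb⟩ : ∃ c ∈ C, G.Adj c b := by
      rcases hbCl with h | h
      · exact absurd (by simpa using h) hbC
      · exact h
    have haC : a ∉ C := fun h => haCl (Or.inl (by simpa using h))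
    have hanotadj : ∀ x ∈ C, ¬ G.Adj x a := fun x hx hadj => haCl (Or.inr ⟨x, hx, hadj⟩)
    have habne : a ≠ b := fun h => haCl (h ▸ hbCl)
    have haI : a ∉ I := fun h => haC (hIC h)
    have hanbC : a ∉ insert b C := by
      simp only [Finset.mem_insert]
      rintro (rfl | h)
      · exact habne rfl
      · exact haC h
    apply hKmax
    refine ⟨insert a (insert b C), insert a I, ?_, ?_, ?_, ?_, ?_, ?_⟩
    · exact Finset.insert_subset_insert _ (hIC.trans (Finset.subset_insert _ _))
    · refine Finset.insert_subset (by simpa using has) (Finset.insert_subset (by simpa using hbs) hCs)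
    · -- independence of insert a I
      rw [Finset.coe_insert]
      refine (haveI : Std.Symm fun a b => ¬G.Adj a b := ⟨fun x y hxy h => hxy h.symm⟩; hIind.insert_of_symm ?_)
      intro x hx hax
      exact fun h => hanotadj x (hIC (by exact_mod_cast hx)) h.symm
    · -- connectivity
      rw [Finset.coe_insert, Finset.coe_insert]
      have h1 : IsConnSet G (insert b ↑C) := isConnSet_insert hcC hCconn hcb
      exact isConnSet_insert (Set.mem_insert b ↑C) h1 hab.symm
    · rw [Finset.card_insert_of_notMem hanbC, Finset.card_insert_of_notMem hbC,
        Finset.card_insert_of_notMem haI]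
      omega
    · rw [Finset.card_insert_of_notMem haI]
      omega
  · -- size: C.card < 2 * aN
    have := le_aN (G := G) (s := (↑s : Set V)) (a := I)
      (by exact_mod_cast fun x hx => hIC.trans hCs hx) hIind
    omega
end DM


lemma pairwise_cons {n : ℕ} {α : Type*} {R : α → α → Prop} (hR : Symmetric R)
    {B : Fin n → α} {D : α} (h0 : ∀ j, R D (B j)) (h : Pairwise fun i j => R (B i) (B j)) :
    Pairwise fun i j => R ((Fin.cons D B : Fin (n+1) → α) i) ((Fin.cons D B : Fin (n+1) → α) j) := by
  intro i j hij
  revert hij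
  refine Fin.cases ?_ ?_ i
  · refine Fin.cases ?_ ?_ j
    · intro hij; exact absurd rfl hij
    · intro j' hij; simpa using h0 j'
  · intro i'
    refine Fin.cases ?_ ?_ j
    · intro hij; simpa using hR (h0 i')
    · intro j' hij
      have hne : i' ≠ j' := fun e => hij (by rw [e])
      simpa using h hne

lemma minor_extend {s D : Set V} (hDs : D ⊆ s) (hDne : D.Nonempty) (hDconn : IsConnSet G D)
    (hdom : ∀ v ∈ s, v ∉ D → ∃ u ∈ D, G.Adj u v) {m : ℕ} (h : HasCMOn G (s \ D) m) :
    HasCMOn G s (m + 1) := by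
  obtain ⟨B, hsub, hne, hconn, hdisj, hadj⟩ := h
  refine ⟨(Fin.cons D B : Fin (m+1) → Set V), ?_, ?_, ?_, ?_, ?_⟩
  · intro i
    refine Fin.cases ?_ ?_ i
    · simpa using hDs
    · intro j; simpa using (hsub j).trans Set.diff_subset
  · intro i
    refine Fin.cases ?_ ?_ i
    · simpa using hDne
    · intro j; simpa using hne j
  · intro i
    refine Fin.cases ?_ ?_ i
    · simpa using hDconn
    · intro j; simpa using hconn j
  · refine pairwise_cons (fun a b hab => hab.symm) ?_ hdisj
    intro j
    rw [Set.disjoint_left]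
    intro x hxD hxB
    exact (hsub j hxB).2 hxD
  · refine pairwise_cons (R := fun a b => ∃ u ∈ a, ∃ v ∈ b, G.Adj u v) ?_ ?_ hadj
    · rintro x y ⟨u, hu, v, hv, huv⟩
      exact ⟨v, hv, u, hu, huv.symm⟩
    · intro j
      obtain ⟨v, hv⟩ := hne j
      obtain ⟨u, huD, huv⟩ := hdom v (hsub j hv).1 (hsub j hv).2
      exact ⟨u, huD, v, hv, huv⟩


lemma main_ineq (t : ℕ) (ht : 1 ≤ t) (p : ℝ) (hp : (t : ℝ) ≤ p)
    (hyp : ∀ (W : Type) [Fintype W] (H : SimpleGraph W),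
      hadwigerNum H ≤ t → (Fintype.card W : ℝ) ≤ p * _root_.indepNum H)
    (s : Finset V) :
    (s.card : ℝ) ≤ (2 * (aN G ↑s : ℝ) - 1) * ((eN G ↑s - t : ℕ) : ℝ) + p * (aN G ↑s : ℝ) := by
  classical
  have hp1 : (1 : ℝ) ≤ p := le_trans (by exact_mod_cast ht) hp
  induction s using Finset.strongInduction with
  | _ s IH =>
    by_cases hcase : eN G ↑s ≤ t
    · -- small Hadwiger number: use the hypothesis
      have h0 : (eN G (↑s : Set V) - t : ℕ) = 0 := Nat.sub_eq_zero_of_le hcase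
      rw [h0]
      have hh := hyp ↥(↑s : Set V) (G.induce ↑s)
        (by rw [hadwigerNum_induce]; exact hcase)
      rw [indepNum_induce] at hh
      have hcard : (Fintype.card ↥(↑s : Set V) : ℝ) = s.card := by norm_num
      rw [hcard] at hh
      push_cast
      linarith
    · push_neg at hcase
      have hsne : s.Nonempty := by
        obtain ⟨B, hsub, hne, -, -, -⟩ := eN_spec (G := G) (↑s : Set V)
        have h1 : 0 < eN G (↑s : Set V) := lt_of_le_of_lt (Nat.zero_le t) hcase
        obtain ⟨x, hx⟩ := hne ⟨0, h1⟩
        exact ⟨x, by exact_mod_cast hsub _ hx⟩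
      obtain ⟨v₁, hv₁⟩ := id hsne
      have ha1 : 1 ≤ aN G (↑s : Set V) := one_le_aN (Finset.mem_coe.mpr hv₁)
      set a := aN G (↑s : Set V) with haa
      set e := eN G (↑s : Set V) with hee
      have hm : ((e - t : ℕ) : ℝ) = (e : ℝ) - t := by
        rw [Nat.cast_sub hcase.le]
      by_cases hconn : IsConnSet G ↑s
      · -- connected case: remove a small connected dominating set
        obtain ⟨D, hDs, hDne, hDconn, hDdom, hDcard⟩ := exists_cds hsne hconn
        have hss' : s \ D ⊂ s := Finset.sdiff_ssubset hDs hDne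
        have IH' := IH (s \ D) hss'
        set a' := aN G (↑(s \ D) : Set V) with haa'
        set e' := eN G (↑(s \ D) : Set V) with hee'
        have ha' : a' ≤ a := by
          apply aN_mono
          rw [Finset.coe_sdiff]
          exact Set.diff_subset
        have hK4 : HasCMOn G ↑s (e' + 1) := by
          refine minor_extend (D := (↑D : Set V)) (by exact_mod_cast hDs)
            (by exact_mod_cast hDne) hDconn ?_ ?_
          · intro v hv hvD
            obtain ⟨u, hu, huv⟩ := hDdom v (by exact_mod_cast hv) (by exact_mod_cast hvD)
            exact ⟨u, by exact_mod_cast hu, huv⟩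
          · rw [← Finset.coe_sdiff]
            exact eN_spec _
        have he' : e' + 1 ≤ e := le_eN hK4
        have hcards : (s.card : ℝ) = (D.card : ℝ) + ((s \ D).card : ℝ) := by
          have := Finset.card_sdiff_add_card_eq_card hDs
          push_cast [← this]
          ring
        have hDcardR : (D.card : ℝ) ≤ 2 * (a : ℝ) - 1 := by
          have : D.card + 1 ≤ 2 * a := hDcard
          have := (Nat.cast_le (α := ℝ)).mpr this
          push_cast at this
          linarith
        have hm' : ((e' - t : ℕ) : ℝ) ≤ (e : ℝ) - t - 1 := by
          have h1 : e' - t ≤ e - t - 1 := by omega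
          have h2 := (Nat.cast_le (α := ℝ)).mpr h1
          have h3 : ((e - t - 1 : ℕ) : ℝ) = (e : ℝ) - t - 1 := by
            have : t + 1 ≤ e := hcase
            push_cast [Nat.cast_sub (by omega : 1 ≤ e - t), Nat.cast_sub hcase.le]
            ring
          linarith [h2, h3.le, h3.ge]
        have hM'0 : (0 : ℝ) ≤ ((e' - t : ℕ) : ℝ) := Nat.cast_nonneg _
        have ha1R : (1 : ℝ) ≤ (a : ℝ) := by exact_mod_cast ha1
        have ha'R : (a' : ℝ) ≤ (a : ℝ) := by exact_mod_cast ha'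
        have ha'0 : (0 : ℝ) ≤ (a' : ℝ) := Nat.cast_nonneg _
        rw [hm]
        nlinarith [IH', mul_nonneg (sub_nonneg.mpr ha'R) hM'0,
          mul_nonneg (by linarith : (0:ℝ) ≤ 2 * (a:ℝ) - 1) (sub_nonneg.mpr hm'),
          mul_nonneg (by linarith : (0:ℝ) ≤ p) (sub_nonneg.mpr ha'R)]
      · -- disconnected case: split
        obtain ⟨s₁, s₂, h1ne, h2ne, huni, hdisj, hcross⟩ :=
          exists_split (by exact_mod_cast hsne : (↑s : Set V).Nonempty) hconn
        have hs₁sub : s₁ ⊆ ↑s := huni ▸ Set.subset_union_left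
        have hs₂sub : s₂ ⊆ ↑s := huni ▸ Set.subset_union_right
        set f₁ := s.filter (· ∈ s₁) with hf₁
        set f₂ := s.filter (· ∈ s₂) with hf₂
        have hc₁ : (↑f₁ : Set V) = s₁ := by
          ext x
          simp only [hf₁, Finset.coe_filter, Set.mem_setOf_eq]
          exact ⟨fun h => h.2, fun h => ⟨by exact_mod_cast hs₁sub h, h⟩⟩
        have hc₂ : (↑f₂ : Set V) = s₂ := by
          ext x
          simp only [hf₂, Finset.coe_filter, Set.mem_setOf_eq]
          exact ⟨fun h => h.2, fun h => ⟨by exact_mod_cast hs₂sub h, h⟩⟩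
        obtain ⟨y₂, hy₂⟩ := h2ne
        obtain ⟨y₁, hy₁⟩ := h1ne
        have hss₁ : f₁ ⊂ s := by
          rw [Finset.ssubset_iff_of_subset (Finset.filter_subset _ _)]
          exact ⟨y₂, by exact_mod_cast hs₂sub hy₂,
            fun h => Set.disjoint_left.mp hdisj (hc₁ ▸ (Finset.mem_coe.mpr h)) hy₂⟩
        have hss₂ : f₂ ⊂ s := by
          rw [Finset.ssubset_iff_of_subset (Finset.filter_subset _ _)]
          exact ⟨y₁, by exact_mod_cast hs₁sub hy₁,
            fun h => Set.disjoint_left.mp hdisj hy₁ (hc₂ ▸ (Finset.mem_coe.mpr h))⟩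
        have IH₁ := IH f₁ hss₁
        have IH₂ := IH f₂ hss₂
        rw [hc₁] at IH₁
        rw [hc₂] at IH₂
        -- card split
        have hdisjf : Disjoint f₁ f₂ := by
          rw [← Finset.disjoint_coe, hc₁, hc₂]
          exact hdisj
        have hunif : f₁ ∪ f₂ = s := by
          apply Finset.coe_injective
          rw [Finset.coe_union, hc₁, hc₂, huni]
        have hcards : s.card = f₁.card + f₂.card := by
          rw [← hunif, Finset.card_union_of_disjoint hdisjf]
        -- independence numbers add up
        set a₁ := aN G s₁ with ha₁
        set a₂ := aN G s₂ with ha₂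
        have hasum : a₁ + a₂ ≤ a := by
          obtain ⟨A₁, hA₁s, hA₁i, hA₁c⟩ := aN_spec (G := G) s₁
          obtain ⟨A₂, hA₂s, hA₂i, hA₂c⟩ := aN_spec (G := G) s₂
          have hdisjA : Disjoint A₁ A₂ := by
            rw [← Finset.disjoint_coe]
            exact Set.disjoint_of_subset hA₁s hA₂s hdisj
          have hiu : _root_.IsIndepSet G ↑(A₁ ∪ A₂) := by
            rw [Finset.coe_union]
            rintro x (hx | hx) y (hy | hy) hxy hadj
            · exact hA₁i hx hy hxy hadj
            · exact hcross x (hA₁s hx) y (hA₂s hy) hadj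
            · exact hcross y (hA₁s hy) x (hA₂s hx) hadj.symm
            · exact hA₂i hx hy hxy hadj
          have := le_aN (G := G) (s := (↑s : Set V))
            (by rw [Finset.coe_union]
                exact Set.union_subset (hA₁s.trans hs₁sub) (hA₂s.trans hs₂sub)) hiu
          rw [Finset.card_union_of_disjoint hdisjA, hA₁c, hA₂c] at this
          exact this
        have he₁ : eN G s₁ ≤ e := eN_mono hs₁sub
        have he₂ : eN G s₂ ≤ e := eN_mono hs₂sub
        have ha₁1 : 1 ≤ a₁ := one_le_aN hy₁
        have ha₂1 : 1 ≤ a₂ := one_le_aN hy₂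
        -- real versions
        have hm₁ : ((eN G s₁ - t : ℕ) : ℝ) ≤ (e : ℝ) - t := by
          rw [← hm]
          exact_mod_cast Nat.sub_le_sub_right he₁ t
        have hm₂ : ((eN G s₂ - t : ℕ) : ℝ) ≤ (e : ℝ) - t := by
          rw [← hm]
          exact_mod_cast Nat.sub_le_sub_right he₂ t
        have hm₁0 : (0 : ℝ) ≤ ((eN G s₁ - t : ℕ) : ℝ) := Nat.cast_nonneg _
        have hm₂0 : (0 : ℝ) ≤ ((eN G s₂ - t : ℕ) : ℝ) := Nat.cast_nonneg _
        have hM0 : (0 : ℝ) ≤ (e : ℝ) - t := by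
          rw [← hm]; exact Nat.cast_nonneg _
        have ha₁R : (1 : ℝ) ≤ (a₁ : ℝ) := by exact_mod_cast ha₁1
        have ha₂R : (1 : ℝ) ≤ (a₂ : ℝ) := by exact_mod_cast ha₂1
        have hasumR : (a₁ : ℝ) + (a₂ : ℝ) ≤ (a : ℝ) := by exact_mod_cast hasum
        have hcardsR : (s.card : ℝ) = (f₁.card : ℝ) + (f₂.card : ℝ) := by
          exact_mod_cast hcards
        rw [hm]
        nlinarith [IH₁, IH₂,
          mul_nonneg (by linarith : (0:ℝ) ≤ 2 * (a₁:ℝ) - 1) (sub_nonneg.mpr hm₁),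
          mul_nonneg (by linarith : (0:ℝ) ≤ 2 * (a₂:ℝ) - 1) (sub_nonneg.mpr hm₂),
          mul_nonneg (by linarith : (0:ℝ) ≤ 2 * (a:ℝ) - 1 - (2*(a₁:ℝ)-1) - (2*(a₂:ℝ)-1)) hM0,
          mul_nonneg (by linarith : (0:ℝ) ≤ p) (by linarith : (0:ℝ) ≤ (a:ℝ) - a₁ - a₂)]

end HadAux


theorem stmt_3 (t : ℕ) (ht : 1 ≤ t) (p : ℝ) (hp : (t : ℝ) ≤ p)
    (hyp : ∀ (W : Type) [Fintype W] (H : SimpleGraph W),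
      hadwigerNum H ≤ t → (Fintype.card W : ℝ) ≤ p * _root_.indepNum H)
    {V : Type} [Fintype V] (G : SimpleGraph V) (hG : t ≤ hadwigerNum G) :
    (2 * Fintype.card V - p) / (4 * hadwigerNum G + 2 * p - 4 * t) + 1 / 2
      ≤ (_root_.indepNum G : ℝ) := by
  classical
  have hmain := HadAux.main_ineq (G := G) t ht p hp hyp Finset.univ
  rw [Finset.coe_univ, HadAux.aN_univ, HadAux.eN_univ, Finset.card_univ] at hmain
  have hηt : ((hadwigerNum G - t : ℕ) : ℝ) = (hadwigerNum G : ℝ) - t := Nat.cast_sub hG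
  rw [hηt] at hmain
  have htη : (t : ℝ) ≤ (hadwigerNum G : ℝ) := Nat.cast_le.mpr hG
  have hp1 : (1 : ℝ) ≤ p := le_trans (by exact_mod_cast ht) hp
  have hd : (0 : ℝ) < 4 * (hadwigerNum G : ℝ) + 2 * p - 4 * t := by linarith
  have key : 2 * (Fintype.card V : ℝ) - p
      ≤ ((_root_.indepNum G : ℝ) - 1 / 2) * (4 * (hadwigerNum G : ℝ) + 2 * p - 4 * t) := by
    nlinarith [hmain]
  have h2 := (div_le_iff₀ hd).mpr key
  linarith
end

section
/- Assuming the theorem of Robertson, Seymour and Thomas that every graph with no K_6-minor is 5-colourable, every finite graph G with η(G) ≥ 5 satisfies (2α(G) − 1)(2η(G) − 5) ≥ 2|V(G)| − 5. -/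
open SimpleGraph

section Basics
variable {V : Type*} [Fintype V] (G : SimpleGraph V)

lemma indep_bddAbove : BddAbove {n | ∃ s : Finset V, _root_.IsIndepSet G ↑s ∧ s.card = n} :=
  ⟨Fintype.card V, by rintro n ⟨s, _, rfl⟩; exact Finset.card_le_univ s⟩

lemma card_le_indepNum {s : Finset V} (h : _root_.IsIndepSet G ↑s) : s.card ≤ _root_.indepNum G :=
  le_csSup (indep_bddAbove G) ⟨s, h, rfl⟩

lemma exists_indep_card : ∃ s : Finset V, _root_.IsIndepSet G ↑s ∧ s.card = _root_.indepNum G := by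
  have hne : Set.Nonempty {n | ∃ s : Finset V, _root_.IsIndepSet G ↑s ∧ s.card = n} :=
    ⟨0, ∅, by simp [_root_.IsIndepSet], by simp⟩
  exact Nat.sSup_mem hne (indep_bddAbove G)

lemma one_le_indepNum [Nonempty V] : 1 ≤ _root_.indepNum G := by
  classical
  have := card_le_indepNum G (s := {Classical.arbitrary V}) (by simp [_root_.IsIndepSet])
  simpa using this

lemma card_le_five_mul_indepNum (h : G.Colorable 5) :
    Fintype.card V ≤ 5 * _root_.indepNum G := by
  classical
  obtain ⟨C⟩ := h
  have : (Finset.univ : Finset V).card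
      = ∑ i : Fin 5, (Finset.univ.filter fun v => C v = i).card :=
    Finset.card_eq_sum_card_fiberwise (by simp)
  rw [← Finset.card_univ] at *
  rw [this]
  have hfib : ∀ i : Fin 5, (Finset.univ.filter fun v => C v = i).card ≤ _root_.indepNum G := by
    intro i
    apply card_le_indepNum
    intro a ha b hb hab hadj
    have := C.valid hadj
    simp only [Finset.coe_filter, Set.mem_setOf_eq] at ha hb
    exact this (ha.2.trans hb.2.symm)
  calc ∑ i : Fin 5, (Finset.univ.filter fun v => C v = i).card
      ≤ ∑ _i : Fin 5, _root_.indepNum G := Finset.sum_le_sum fun i _ => hfib i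
    _ = 5 * _root_.indepNum G := by simp [Finset.sum_const, mul_comm]

end Basics

section Hadwiger
variable {V : Type*} [Fintype V] (G : SimpleGraph V)
set_option linter.unusedSectionVars false

lemma hasCliqueMinor_zero : HasCliqueMinor G 0 :=
  ⟨Fin.elim0, fun i => i.elim0, fun i => i.elim0, fun i => i.elim0, fun i => i.elim0⟩

lemma hasCliqueMinor_mono {m n : ℕ} (hmn : m ≤ n) (h : HasCliqueMinor G n) :
    HasCliqueMinor G m := by
  obtain ⟨B, h1, h2, h3, h4⟩ := h
  refine ⟨fun i => B (Fin.castLE hmn i), fun i => h1 _, fun i => h2 _, ?_, ?_⟩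
  · exact fun i j hij => h3 (fun e => hij (Fin.castLE_injective hmn e))
  · exact fun i j hij => h4 (fun e => hij (Fin.castLE_injective hmn e))

lemma hasCliqueMinor_card_le {n : ℕ} (h : HasCliqueMinor G n) : n ≤ Fintype.card V := by
  obtain ⟨B, h1, _, h3, _⟩ := h
  have hinj : Function.Injective (fun i => (h1 i).choose) := by
    intro i j hij
    by_contra hne
    have hmem : (h1 i).choose ∈ B j := by
      rw [show (h1 i).choose = (h1 j).choose from hij]
      exact (h1 j).choose_spec
    exact Set.disjoint_left.mp (h3 hne) (h1 i).choose_spec hmem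
  simpa using Fintype.card_le_of_injective _ hinj

lemma hadwiger_bddAbove : BddAbove {n | HasCliqueMinor G n} :=
  ⟨Fintype.card V, fun n hn => hasCliqueMinor_card_le G hn⟩

lemma hadwigerNum_spec : HasCliqueMinor G (hadwigerNum G) := by
  have hne : Set.Nonempty {n | HasCliqueMinor G n} := ⟨0, hasCliqueMinor_zero G⟩
  exact Nat.sSup_mem hne (hadwiger_bddAbove G)

lemma le_hadwigerNum {n : ℕ} (h : HasCliqueMinor G n) : n ≤ hadwigerNum G :=
  le_csSup (hadwiger_bddAbove G) h

end Hadwiger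

section Induce
variable {V : Type*} (G : SimpleGraph V)

/-- Iso between double induce and induce of the image. -/
noncomputable def induceInduceIso (s : Set V) (B : Set s) :
    (G.induce s).induce B ≃g G.induce (Subtype.val '' B) where
  toEquiv := Equiv.Set.image Subtype.val B Subtype.val_injective
  map_rel_iff' := by
    rintro ⟨⟨a, ha⟩, haB⟩ ⟨⟨b, hb⟩, hbB⟩
    simp [Equiv.Set.image, Equiv.Set.imageOfInjOn, comap_adj]

lemma isConnSet_image {s : Set V} {B : Set s} (h : IsConnSet (G.induce s) B) :
    IsConnSet G (Subtype.val '' B) :=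
  (induceInduceIso G s B).connected_iff.mp h

lemma hasCliqueMinor_induce {s : Set V} {n : ℕ} (h : HasCliqueMinor (G.induce s) n) :
    HasCliqueMinor G n := by
  obtain ⟨B, h1, h2, h3, h4⟩ := h
  refine ⟨fun i => Subtype.val '' B i, fun i => (h1 i).image _,
    fun i => isConnSet_image G (h2 i), ?_, ?_⟩
  · intro i j hij
    exact (Set.disjoint_image_iff Subtype.val_injective).mpr (h3 hij)
  · intro i j hij
    obtain ⟨u, hu, v, hv, huv⟩ := h4 hij
    exact ⟨u, Set.mem_image_of_mem _ hu, v, Set.mem_image_of_mem _ hv, huv⟩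

lemma indepNum_induce_le [Fintype V] {s : Set V} [Fintype s] :
    _root_.indepNum (G.induce s) ≤ _root_.indepNum G := by
  classical
  have hne : Set.Nonempty {n | ∃ t : Finset ↥s, _root_.IsIndepSet (G.induce s) ↑t ∧ t.card = n} :=
    ⟨0, ∅, by simp [_root_.IsIndepSet], by simp⟩
  apply csSup_le hne
  rintro n ⟨t, ht, rfl⟩
  have hind : _root_.IsIndepSet G ↑(t.map (Function.Embedding.subtype _)) := by
    rw [Finset.coe_map]
    rintro a ⟨x, hx, rfl⟩ b ⟨y, hy, rfl⟩ hne hadj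
    have hxy : x ≠ y := fun e => hne (by rw [e])
    exact ht hx hy hxy hadj
  simpa using card_le_indepNum G hind

lemma hadwigerNum_induce_le [Fintype V] {s : Set V} [Fintype s] :
    hadwigerNum (G.induce s) ≤ hadwigerNum G := by
  have hne : Set.Nonempty {n | HasCliqueMinor (G.induce s) n} := ⟨0, hasCliqueMinor_zero _⟩
  apply csSup_le hne
  exact fun n hn => le_hadwigerNum G (hasCliqueMinor_induce G hn)

lemma hasCliqueMinor_succ {D : Set V} (hconn : IsConnSet G D) (hdom : IsDomSet G D)
    {n : ℕ} (h : HasCliqueMinor (G.induce Dᶜ) n) : HasCliqueMinor G (n + 1) := by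
  obtain ⟨B0, h1, h2, h3, h4⟩ := h
  set B : Fin n → Set V := fun i => Subtype.val '' B0 i with hB
  have hsub : ∀ i x, x ∈ B i → x ∉ D := by rintro i x ⟨y, hy, rfl⟩; exact y.2
  have h1' : ∀ i, (B i).Nonempty := fun i => (h1 i).image _
  have h2' : ∀ i, IsConnSet G (B i) := fun i => isConnSet_image G (h2 i)
  have h3' : Pairwise fun i j => Disjoint (B i) (B j) :=
    fun i j hij => (Set.disjoint_image_iff Subtype.val_injective).mpr (h3 hij)
  have h4' : Pairwise fun i j => ∃ u ∈ B i, ∃ v ∈ B j, G.Adj u v := by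
    intro i j hij
    obtain ⟨u, hu, v, hv, huv⟩ := h4 hij
    exact ⟨u, Set.mem_image_of_mem _ hu, v, Set.mem_image_of_mem _ hv, huv⟩
  have hcast : ∀ k : Fin (n+1), k ≠ Fin.last n → ∃ k' : Fin n, k = Fin.castSucc k' :=
    fun k hk => ⟨k.castPred hk, (Fin.castSucc_castPred k hk).symm⟩
  have hDne : D.Nonempty := Set.nonempty_coe_sort.mp hconn.nonempty
  refine ⟨Fin.snoc B D, ?_, ?_, ?_, ?_⟩
  · intro i
    by_cases hi : i = Fin.last n
    · subst hi; simpa using hDne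
    · obtain ⟨i', rfl⟩ := hcast i hi; simpa using h1' i'
  · intro i
    by_cases hi : i = Fin.last n
    · subst hi; simpa using hconn
    · obtain ⟨i', rfl⟩ := hcast i hi; simpa using h2' i'
  · intro i j hij
    by_cases hi : i = Fin.last n
    · subst hi
      obtain ⟨j', rfl⟩ := hcast j (fun e => hij e.symm)
      simp only [Fin.snoc_last, Fin.snoc_castSucc]
      exact Set.disjoint_left.mpr fun {x} hxD hxB => hsub j' x hxB hxD
    · obtain ⟨i', rfl⟩ := hcast i hi
      by_cases hj : j = Fin.last n
      · subst hj
        simp only [Fin.snoc_last, Fin.snoc_castSucc]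
        exact Set.disjoint_right.mpr fun {x} hxD hxB => hsub i' x hxB hxD
      · obtain ⟨j', rfl⟩ := hcast j hj
        simp only [Fin.snoc_castSucc]
        exact h3' fun e => hij (by rw [e])
  · intro i j hij
    by_cases hi : i = Fin.last n
    · subst hi
      obtain ⟨j', rfl⟩ := hcast j (fun e => hij e.symm)
      obtain ⟨v, hv⟩ := h1' j'
      obtain ⟨u, hu, huv⟩ := hdom v (hsub j' v hv)
      exact ⟨u, by simpa using hu, v, by simpa using hv, huv⟩
    · obtain ⟨i', rfl⟩ := hcast i hi
      by_cases hj : j = Fin.last n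
      · subst hj
        obtain ⟨u, hu⟩ := h1' i'
        obtain ⟨d, hd, hdu⟩ := hdom u (hsub i' u hu)
        exact ⟨u, by simpa using hu, d, by simpa using hd, hdu.symm⟩
      · obtain ⟨j', rfl⟩ := hcast j hj
        obtain ⟨u, hu, v, hv, huv⟩ := h4' (show i' ≠ j' from fun e => hij (by rw [e]))
        exact ⟨u, by simpa using hu, v, by simpa using hv, huv⟩

end Induce

section Dom
variable {V : Type*} [Fintype V] (G : SimpleGraph V)
set_option linter.unusedSectionVars false

omit [Fintype V] in
lemma induce_singleton_connected (x : V) : (G.induce ({x} : Set V)).Connected := by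
  have hne : Nonempty ↥({x} : Set V) := ⟨⟨x, rfl⟩⟩
  refine ⟨fun a b => ?_⟩
  have hab : a = b := Subtype.ext (a.2.trans b.2.symm)
  exact hab ▸ Reachable.refl _

omit [Fintype V] in
lemma walk_boundary (P : V → Prop) :
    ∀ {a b : V} (p : G.Walk a b), ¬ P a → P b → ∃ w x, G.Adj w x ∧ ¬ P w ∧ P x := by
  intro a b p
  induction p with
  | nil => intro ha hb; exact absurd hb ha
  | @cons u v w h q ih =>
    intro ha hb
    by_cases hP : P v
    · exact ⟨u, v, h, ha, hP⟩
    · exact ih hP hb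

lemma exists_conn_dom_set (hcon : G.Connected) :
    ∃ D : Finset V, IsConnSet G ↑D ∧ IsDomSet G ↑D ∧ D.card + 1 ≤ 2 * _root_.indepNum G := by
  classical
  set U : Finset V → Finset V :=
    fun S => Finset.univ.filter (fun v => v ∉ S ∧ ∀ u ∈ S, ¬ G.Adj u v) with hUdef
  have hdomU : ∀ S : Finset V, U S = ∅ → IsDomSet G ↑S := by
    intro S hUS v hv
    by_contra hno
    push_neg at hno
    have hvS : v ∉ S := by simpa using hv
    have : v ∈ U S := by
      simp only [hUdef, Finset.mem_filter, Finset.mem_univ, true_and]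
      exact ⟨hvS, fun u hu => hno u (by simpa using hu)⟩
    simp [hUS] at this
  suffices h : ∀ (k : ℕ) (S I : Finset V), I ⊆ S → S.Nonempty → IsConnSet G ↑S →
      _root_.IsIndepSet G ↑I → S.card + 1 ≤ 2 * I.card → (U S).card ≤ k →
      ∃ D : Finset V, IsConnSet G ↑D ∧ IsDomSet G ↑D ∧ D.card + 1 ≤ 2 * _root_.indepNum G by
    obtain ⟨v0⟩ := hcon.nonempty
    refine h (U {v0}).card {v0} {v0} subset_rfl ⟨v0, by simp⟩ ?_ ?_ (by simp) le_rfl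
    · show IsConnSet G ↑({v0} : Finset V)
      unfold IsConnSet
      rw [Finset.coe_singleton]
      exact induce_singleton_connected G v0
    · intro a ha b hb hab
      simp only [Finset.coe_singleton, Set.mem_singleton_iff] at ha hb
      exact absurd (ha.trans hb.symm) hab
  intro k
  induction k with
  | zero =>
    intro S I hIS hSne hSconn hIind hcard hU
    have hUe : U S = ∅ := Finset.card_eq_zero.mp (Nat.le_zero.mp hU)
    exact ⟨S, hSconn, hdomU S hUe,
      le_trans hcard (by have := card_le_indepNum G hIind; omega)⟩
  | succ k ih =>
    intro S I hIS hSne hSconn hIind hcard hU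
    by_cases hUe : U S = ∅
    · exact ⟨S, hSconn, hdomU S hUe,
        le_trans hcard (by have := card_le_indepNum G hIind; omega)⟩
    · obtain ⟨v, hv⟩ := Finset.nonempty_iff_ne_empty.mpr hUe
      simp only [hUdef, Finset.mem_filter, Finset.mem_univ, true_and] at hv
      obtain ⟨hvS, hvadj⟩ := hv
      obtain ⟨s0, hs0⟩ := hSne
      obtain ⟨p⟩ := hcon.preconnected v s0
      have hPv : ¬ (v ∈ S ∨ ∃ u ∈ S, G.Adj u v) := by
        push_neg; exact ⟨hvS, hvadj⟩
      obtain ⟨w, x, hwx, hPw, hPx⟩ :=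
        walk_boundary G (fun y => y ∈ S ∨ ∃ u ∈ S, G.Adj u y) p hPv (Or.inl hs0)
      push_neg at hPw
      obtain ⟨hwS, hwadj⟩ := hPw
      have hxS : x ∉ S := fun hxS => hwadj x hxS hwx.symm
      have hux : ∃ u ∈ S, G.Adj u x := hPx.resolve_left hxS
      obtain ⟨u0, hu0S, hu0x⟩ := hux
      have hwI : w ∉ I := fun hwI => hwS (hIS hwI)
      -- new sets
      set S' : Finset V := insert x (insert w S) with hS'
      set I' : Finset V := insert w I with hI'
      have hIS' : I' ⊆ S' := by
        intro a ha
        rcases Finset.mem_insert.mp ha with rfl | ha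
        · exact Finset.mem_insert_of_mem (Finset.mem_insert_self _ _)
        · exact Finset.mem_insert_of_mem (Finset.mem_insert_of_mem (hIS ha))
      have hconn' : IsConnSet G ↑S' := by
        have hset : (↑S' : Set V) = (((↑S : Set V) ∪ {x}) ∪ {w}) := by
          ext y; simp [hS']; tauto
        have c1 : (G.induce ((↑S : Set V) ∪ {x})).Connected :=
          connected_induce_union hSconn.preconnected (induce_singleton_connected G x).preconnected
            (by simpa using hu0S) rfl hu0x
        have c2 : (G.induce (((↑S : Set V) ∪ {x}) ∪ {w})).Connected :=
          connected_induce_union c1.preconnected (induce_singleton_connected G w).preconnected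
            (Or.inr rfl) rfl hwx.symm
        unfold IsConnSet
        rw [hset]
        exact c2
      have hind' : _root_.IsIndepSet G ↑I' := by
        rw [hI', Finset.coe_insert]
        haveI : Std.Symm (fun a b : V => ¬ G.Adj a b) := ⟨fun a b hab hadj => hab hadj.symm⟩
        refine Set.pairwise_insert_of_symm.mpr ⟨hIind, ?_⟩
        · intro b hb _ hadj
          exact hwadj b (hIS (by simpa using hb)) (hadj.symm)
      have hcard' : S'.card + 1 ≤ 2 * I'.card := by
        have h1 : S'.card ≤ S.card + 2 := by
          calc S'.card ≤ (insert w S).card + 1 := Finset.card_insert_le _ _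
            _ ≤ S.card + 2 := by have := Finset.card_insert_le w S; omega
        have h2 : I'.card = I.card + 1 := Finset.card_insert_of_notMem hwI
        omega
      have hUless : (U S').card ≤ k := by
        have hsub : U S' ⊆ (U S).erase w := by
          intro y hy
          simp only [hUdef, Finset.mem_filter, Finset.mem_univ, true_and] at hy
          obtain ⟨hyS', hyadj⟩ := hy
          have hyS : y ∉ S := fun h =>
            hyS' (Finset.mem_insert_of_mem (Finset.mem_insert_of_mem h))
          have hyw : y ≠ w := fun e => hyS'
            (e ▸ Finset.mem_insert_of_mem (Finset.mem_insert_self _ _))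
          refine Finset.mem_erase.mpr ⟨hyw, ?_⟩
          simp only [hUdef, Finset.mem_filter, Finset.mem_univ, true_and]
          exact ⟨hyS, fun u hu =>
            hyadj u (Finset.mem_insert_of_mem (Finset.mem_insert_of_mem hu))⟩
        have hwU : w ∈ U S := by
          simp only [hUdef, Finset.mem_filter, Finset.mem_univ, true_and]
          exact ⟨hwS, hwadj⟩
        have := Finset.card_le_card hsub
        rw [Finset.card_erase_of_mem hwU] at this
        omega
      exact ih S' I' hIS' ⟨x, Finset.mem_insert_self _ _⟩ hconn' hind' hcard' hUless

end Dom

section Parts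
variable {V : Type*} [Fintype V] (G : SimpleGraph V)
set_option linter.unusedSectionVars false

lemma indepNum_union_le (s : Set V) [Fintype s] [Fintype ↥sᶜ]
    (hclosed : ∀ u ∈ s, ∀ x, G.Adj u x → x ∈ s) :
    _root_.indepNum (G.induce s) + _root_.indepNum (G.induce sᶜ) ≤ _root_.indepNum G := by
  classical
  obtain ⟨t1, ht1, hc1⟩ := exists_indep_card (G.induce s)
  obtain ⟨t2, ht2, hc2⟩ := exists_indep_card (G.induce sᶜ)
  set T : Finset V :=
    t1.map (Function.Embedding.subtype _) ∪ t2.map (Function.Embedding.subtype _) with hT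
  have hmem1 : ∀ a ∈ t1.map (Function.Embedding.subtype (· ∈ s)), a ∈ s := by
    intro a ha
    obtain ⟨x, _, rfl⟩ := Finset.mem_map.mp ha
    exact x.2
  have hmem2 : ∀ a ∈ t2.map (Function.Embedding.subtype (· ∈ sᶜ)), a ∈ sᶜ := by
    intro a ha
    obtain ⟨x, _, rfl⟩ := Finset.mem_map.mp ha
    exact x.2
  have hdisj : Disjoint (t1.map (Function.Embedding.subtype _))
      (t2.map (Function.Embedding.subtype _)) := by
    rw [Finset.disjoint_left]
    intro a h1 h2
    exact (hmem2 a h2) (hmem1 a h1)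
  have hTcard : T.card = _root_.indepNum (G.induce s) + _root_.indepNum (G.induce sᶜ) := by
    rw [hT, Finset.card_union_of_disjoint hdisj, Finset.card_map, Finset.card_map, hc1, hc2]
  have hTind : _root_.IsIndepSet G ↑T := by
    intro a ha b hb hne hadj
    simp only [hT, Finset.coe_union, Set.mem_union, Finset.mem_coe] at ha hb
    rcases ha with ha | ha <;> rcases hb with hb | hb
    · obtain ⟨x, hx, rfl⟩ := Finset.mem_map.mp ha
      obtain ⟨y, hy, rfl⟩ := Finset.mem_map.mp hb
      exact ht1 hx hy (fun e => hne (by rw [e])) hadj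
    · exact (hmem2 b hb) (hclosed _ (hmem1 a ha) b hadj)
    · exact (hmem2 a ha) (hclosed _ (hmem1 b hb) a hadj.symm)
    · obtain ⟨x, hx, rfl⟩ := Finset.mem_map.mp ha
      obtain ⟨y, hy, rfl⟩ := Finset.mem_map.mp hb
      exact ht2 hx hy (fun e => hne (by rw [e])) hadj
  calc _root_.indepNum (G.induce s) + _root_.indepNum (G.induce sᶜ) = T.card := hTcard.symm
    _ ≤ _root_.indepNum G := card_le_indepNum G hTind

lemma card_subtype_lt' {s : Set V} [Fintype s] {x : V} (hx : x ∉ s) :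
    Fintype.card s < Fintype.card V := by
  apply Fintype.card_lt_of_injective_of_notMem Subtype.val Subtype.val_injective (b := x)
  rw [Subtype.range_coe]
  exact hx

lemma card_subtype_le' (s : Set V) [Fintype s] : Fintype.card s ≤ Fintype.card V :=
  Fintype.card_le_of_injective Subtype.val Subtype.val_injective

end Parts

section MainLemma

lemma part_bound
    (RST : ∀ (W : Type) [Fintype W] (H : SimpleGraph W), ¬ HasCliqueMinor H 6 → H.Colorable 5)
    (N : ℕ)
    (IH : ∀ (W : Type) [inst : Fintype W] (H : SimpleGraph W), Fintype.card W ≤ N →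
      5 ≤ hadwigerNum H →
      (2 * (Fintype.card W : ℤ) - 5) ≤ (2 * _root_.indepNum H - 1) * (2 * hadwigerNum H - 5))
    {V : Type} [Fintype V] (G : SimpleGraph V) (s : Set V) [Fintype s]
    (hcard : Fintype.card s ≤ N) (hne : s.Nonempty) (h : ℕ) (hh : 5 ≤ h)
    (hcap : ∀ n, HasCliqueMinor (G.induce s) n → n ≤ h) :
    2 * (Fintype.card s : ℤ) - 5 ≤ (2 * (_root_.indepNum (G.induce s)) - 1) * (2 * (h : ℤ) - 5) := by
  classical
  haveI : Nonempty ↥s := hne.to_subtype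
  have hα : 1 ≤ _root_.indepNum (G.induce s) := one_le_indepNum _
  have c3 : (1 : ℤ) ≤ (_root_.indepNum (G.induce s) : ℤ) := by exact_mod_cast hα
  have c4 : (5 : ℤ) ≤ (h : ℤ) := by exact_mod_cast hh
  by_cases h6 : HasCliqueMinor (G.induce s) 6
  · have hη6 : 6 ≤ hadwigerNum (G.induce s) := le_hadwigerNum _ h6
    have hηcap : hadwigerNum (G.induce s) ≤ h := hcap _ (hadwigerNum_spec _)
    have hIH := IH ↥s (G.induce s) hcard (by omega)
    have c1 : (6 : ℤ) ≤ (hadwigerNum (G.induce s) : ℤ) := by exact_mod_cast hη6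
    have c2 : (hadwigerNum (G.induce s) : ℤ) ≤ (h : ℤ) := by exact_mod_cast hηcap
    nlinarith [hIH, mul_nonneg (by linarith : (0:ℤ) ≤ 2 * (_root_.indepNum (G.induce s) : ℤ) - 1)
      (by linarith : (0:ℤ) ≤ (h : ℤ) - (hadwigerNum (G.induce s) : ℤ))]
  · have hcol := RST ↥s (G.induce s) h6
    have hc5 := card_le_five_mul_indepNum (G.induce s) hcol
    have c1 : (Fintype.card s : ℤ) ≤ 5 * (_root_.indepNum (G.induce s) : ℤ) := by exact_mod_cast hc5
    nlinarith [mul_nonneg (by linarith : (0:ℤ) ≤ 2 * (_root_.indepNum (G.induce s) : ℤ) - 1)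
      (by linarith : (0:ℤ) ≤ 2 * (h : ℤ) - 10)]

end MainLemma

theorem stmt_6
    (RST : ∀ (W : Type) [Fintype W] (H : SimpleGraph W),
      ¬ HasCliqueMinor H 6 → H.Colorable 5)
    {V : Type} [Fintype V] (G : SimpleGraph V) (hG : 5 ≤ hadwigerNum G) :
    (2 * (Fintype.card V : ℤ) - 5) ≤ (2 * _root_.indepNum G - 1) * (2 * hadwigerNum G - 5) := by
  classical
  suffices h : ∀ (N : ℕ) (W : Type) [inst : Fintype W] (H : SimpleGraph W), Fintype.card W ≤ N →
      5 ≤ hadwigerNum H →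
      (2 * (Fintype.card W : ℤ) - 5) ≤ (2 * _root_.indepNum H - 1) * (2 * hadwigerNum H - 5) by
    exact h (Fintype.card V) V G le_rfl hG
  intro N
  induction N with
  | zero =>
    intro W _ H hcard hG5
    exfalso
    have := hasCliqueMinor_card_le H (hadwigerNum_spec H)
    omega
  | succ N ihN =>
    intro W _ H hcard hG5
    have hcard5 : 5 ≤ Fintype.card W := le_trans hG5 (hasCliqueMinor_card_le H (hadwigerNum_spec H))
    haveI : Nonempty W := by rw [← Fintype.card_pos_iff]; omega
    have hα1 : 1 ≤ _root_.indepNum H := one_le_indepNum H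
    have c3 : (1 : ℤ) ≤ (_root_.indepNum H : ℤ) := by exact_mod_cast hα1
    have c5 : (5 : ℤ) ≤ (hadwigerNum H : ℤ) := by exact_mod_cast hG5
    by_cases h6 : HasCliqueMinor H 6
    · have hη6 : 6 ≤ hadwigerNum H := le_hadwigerNum H h6
      have c6 : (6 : ℤ) ≤ (hadwigerNum H : ℤ) := by exact_mod_cast hη6
      by_cases hcon : H.Connected
      · -- connected case
        obtain ⟨D, hDconn, hDdom, hDcard⟩ := exists_conn_dom_set H hcon
        haveI : Fintype ↥((↑D : Set W)ᶜ) := Fintype.ofFinite _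
        have hDco : Fintype.card ↥(↑D : Set W) = D.card := by
          rw [← Set.toFinset_card, Finset.toFinset_coe]
        have hcardsum : Fintype.card ↥((↑D : Set W)ᶜ) + D.card = Fintype.card W := by
          have h1 : Fintype.card ↥((↑D : Set W)ᶜ)
              = Fintype.card W - Fintype.card ↥(↑D : Set W) := Fintype.card_compl_set _
          have h2 := card_subtype_le' (↑D : Set W)
          omega
        have hDcardle : D.card + 1 ≤ 2 * _root_.indepNum H := hDcard
        have hcap : ∀ n, HasCliqueMinor (H.induce ((↑D : Set W)ᶜ)) n → n ≤ hadwigerNum H - 1 := by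
          intro n hn
          have h' : HasCliqueMinor H (n + 1) := hasCliqueMinor_succ H hDconn hDdom hn
          have := le_hadwigerNum H h'
          omega
        by_cases hse : ((↑D : Set W)ᶜ).Nonempty
        · have hDne : D.Nonempty := by
            have := hDconn.nonempty
            obtain ⟨⟨x, hx⟩⟩ := this
            exact ⟨x, hx⟩
          have hscard : Fintype.card ↥((↑D : Set W)ᶜ) ≤ N := by
            have : 1 ≤ D.card := Finset.card_pos.mpr hDne
            omega
          have hpb := part_bound RST N ihN H ((↑D : Set W)ᶜ) hscard hse (hadwigerNum H - 1)
            (by omega) hcap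
          have hαle : _root_.indepNum (H.induce ((↑D : Set W)ᶜ)) ≤ _root_.indepNum H := indepNum_induce_le H
          have cα : (_root_.indepNum (H.induce ((↑D : Set W)ᶜ)) : ℤ) ≤ (_root_.indepNum H : ℤ) := by
            exact_mod_cast hαle
          have cαs : (1 : ℤ) ≤ (_root_.indepNum (H.induce ((↑D : Set W)ᶜ)) : ℤ) := by
            haveI : Nonempty ↥((↑D : Set W)ᶜ) := hse.to_subtype
            exact_mod_cast one_le_indepNum (H.induce ((↑D : Set W)ᶜ))
          have chm1 : ((hadwigerNum H - 1 : ℕ) : ℤ) = (hadwigerNum H : ℤ) - 1 := by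
            omega
          rw [chm1] at hpb
          have hcsum : (Fintype.card ↥((↑D : Set W)ᶜ) : ℤ) + (D.card : ℤ)
              = (Fintype.card W : ℤ) := by exact_mod_cast hcardsum
          have hDc : (D.card : ℤ) + 1 ≤ 2 * (_root_.indepNum H : ℤ) := by exact_mod_cast hDcardle
          nlinarith [hpb, mul_nonneg
            (by linarith : (0:ℤ) ≤ (_root_.indepNum H : ℤ) - (_root_.indepNum (H.induce ((↑D : Set W)ᶜ)) : ℤ))
            (by linarith : (0:ℤ) ≤ 2 * (hadwigerNum H : ℤ) - 7)]
        · -- complement empty : W = D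
          have he : (↑D : Set W)ᶜ = ∅ := Set.not_nonempty_iff_eq_empty.mp hse
          have hsc : Fintype.card ↥((↑D : Set W)ᶜ) = 0 :=
            Fintype.card_eq_zero_iff.mpr ⟨fun x => Set.eq_empty_iff_forall_notMem.mp he x.1 x.2⟩
          have hDc : (D.card : ℤ) + 1 ≤ 2 * (_root_.indepNum H : ℤ) := by exact_mod_cast hDcardle
          have hcw : (Fintype.card W : ℤ) = (D.card : ℤ) := by
            have := hcardsum
            rw [hsc] at this
            omega
          nlinarith [mul_nonneg (by linarith : (0:ℤ) ≤ 2 * (_root_.indepNum H : ℤ) - 1)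
            (by linarith : (0:ℤ) ≤ 2 * (hadwigerNum H : ℤ) - 7)]
      · -- disconnected case
        obtain ⟨v, w0, hvw⟩ : ∃ v w0, ¬ H.Reachable v w0 := by
          by_contra hno
          push_neg at hno
          exact hcon ⟨fun a b => hno a b⟩
        set C : Set W := {u | H.Reachable v u} with hC
        haveI : Fintype ↥C := Fintype.ofFinite _
        haveI : Fintype ↥Cᶜ := Fintype.ofFinite _
        have hvC : v ∈ C := Reachable.refl v
        have hwC : w0 ∈ Cᶜ := hvw
        have hclosed : ∀ u ∈ C, ∀ x, H.Adj u x → x ∈ C :=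
          fun u hu x hadj => Reachable.trans hu hadj.reachable
        have hcapC : ∀ n, HasCliqueMinor (H.induce C) n → n ≤ hadwigerNum H :=
          fun n hn => le_hadwigerNum H (hasCliqueMinor_induce H hn)
        have hcapCc : ∀ n, HasCliqueMinor (H.induce Cᶜ) n → n ≤ hadwigerNum H :=
          fun n hn => le_hadwigerNum H (hasCliqueMinor_induce H hn)
        have hcC : Fintype.card ↥C < Fintype.card W := card_subtype_lt' hwC
        have hcCc : Fintype.card ↥Cᶜ < Fintype.card W := card_subtype_lt' (by simpa using hvC)
        have hcsum : Fintype.card ↥Cᶜ + Fintype.card ↥C = Fintype.card W := by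
          rw [Fintype.card_compl_set]
          have := card_subtype_le' C
          omega
        have hpbC := part_bound RST N ihN H C (by omega) ⟨v, hvC⟩ (hadwigerNum H) (by omega) hcapC
        have hpbCc := part_bound RST N ihN H Cᶜ (by omega) ⟨w0, hwC⟩ (hadwigerNum H) (by omega) hcapCc
        have hαadd : _root_.indepNum (H.induce C) + _root_.indepNum (H.induce Cᶜ) ≤ _root_.indepNum H :=
          indepNum_union_le H C hclosed
        have cαadd : (_root_.indepNum (H.induce C) : ℤ) + (_root_.indepNum (H.induce Cᶜ) : ℤ) ≤ (_root_.indepNum H : ℤ) := by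
          exact_mod_cast hαadd
        have hcsz : (Fintype.card ↥Cᶜ : ℤ) + (Fintype.card ↥C : ℤ) = (Fintype.card W : ℤ) := by
          exact_mod_cast hcsum
        nlinarith [hpbC, hpbCc, mul_nonneg
          (by linarith : (0:ℤ) ≤ 2 * (_root_.indepNum H : ℤ) - 2 * (_root_.indepNum (H.induce C) : ℤ) - 2 * (_root_.indepNum (H.induce Cᶜ) : ℤ))
          (by linarith : (0:ℤ) ≤ 2 * (hadwigerNum H : ℤ) - 5)]
    · -- no K6 minor
      have hcol := RST W H h6
      have hc5 := card_le_five_mul_indepNum H hcol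
      have c1 : (Fintype.card W : ℤ) ≤ 5 * (_root_.indepNum H : ℤ) := by exact_mod_cast hc5
      nlinarith [mul_nonneg (by linarith : (0:ℤ) ≤ 2 * (_root_.indepNum H : ℤ) - 1)
        (by linarith : (0:ℤ) ≤ 2 * (hadwigerNum H : ℤ) - 10)]
end

section
/- If D is a connected set of vertices in a finite graph G containing an independent set S with |D| = 2|S| − 1, and D is not dominating, then there exist vertices v, w with v at distance exactly 2 from D, w adjacent to v and to some vertex of D, such that D ∪ {v, w} is connected and S ∪ {v} is an independent set of size |S| + 1. -/
open SimpleGraph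

private lemma find_bridge {V : Type*} (G : SimpleGraph V) (D : Set V) :
    ∀ {x u : V} (_ : G.Walk x u),
      (x ∉ D ∧ ∀ z ∈ D, ¬ G.Adj z x) → (u ∈ D) →
      ∃ v w, (v ∉ D ∧ ∀ z ∈ D, ¬ G.Adj z v) ∧ G.Adj v w ∧ ∃ z ∈ D, G.Adj w z := by
  intro x u p
  induction p with
  | nil => intro hx hu; exact absurd hu hx.1
  | @cons a b c h p ih =>
    intro hx hu
    by_cases hb : b ∈ D
    · exact absurd (h.symm) (hx.2 b hb)
    · by_cases hb2 : ∃ z ∈ D, G.Adj z b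
      · obtain ⟨z, hz, hzb⟩ := hb2
        exact ⟨a, b, hx, h, z, hz, hzb.symm⟩
      · push_neg at hb2
        exact ih ⟨hb, hb2⟩ hu

theorem stmt_11 {V : Type*} [Fintype V] [DecidableEq V] (G : SimpleGraph V)
    (hG : G.Connected) (D S : Finset V) (hSD : S ⊆ D)
    (hconn : IsConnSet G ↑D) (hindep : _root_.IsIndepSet G ↑S)
    (hcard : D.card = 2 * S.card - 1) (hdom : ¬ IsDomSet G ↑D) :
    ∃ v w : V, sInf {d | ∃ u ∈ D, G.dist v u = d} = 2 ∧
      G.Adj w v ∧ (∃ u ∈ D, G.Adj w u) ∧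
      IsConnSet G ↑(D ∪ {v, w}) ∧
      _root_.IsIndepSet G ↑(insert v S) ∧ (insert v S).card = S.card + 1 := by
  -- an undominated vertex x
  rw [IsDomSet] at hdom
  push_neg at hdom
  obtain ⟨x, hxD, hxno⟩ := hdom
  -- D is nonempty since its induced graph is connected
  have hDne : ∃ u : V, u ∈ D := by
    obtain ⟨⟨u, hu⟩⟩ := hconn.nonempty
    exact ⟨u, hu⟩
  obtain ⟨u, hu⟩ := hDne
  obtain ⟨p⟩ := hG.preconnected x u
  obtain ⟨v, w, hv, hvw, u₀, hu₀, hwu₀⟩ :=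
    find_bridge G (↑D) p ⟨by simpa using hxD, fun z hz => hxno z (by simpa using hz)⟩
    (by simpa using hu)
  have hvD : v ∉ D := by simpa using hv.1
  have hvnadj : ∀ z ∈ D, ¬ G.Adj z v := fun z hz => hv.2 z (by simpa using hz)
  have hu₀D : u₀ ∈ D := by simpa using hu₀
  have hwD : w ∉ D := fun hw => hvnadj w hw hvw.symm
  -- distance computations
  have hdist2 : G.dist v u₀ = 2 := by
    have hle : G.dist v u₀ ≤ 2 := by
      have : (Walk.cons hvw (Walk.cons hwu₀ Walk.nil) : G.Walk v u₀).length = 2 := rfl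
      calc G.dist v u₀ ≤ _ := SimpleGraph.dist_le (Walk.cons hvw (Walk.cons hwu₀ Walk.nil))
        _ = 2 := this
    have hge : 2 ≤ G.dist v u₀ := by
      rcases Nat.lt_or_ge (G.dist v u₀) 2 with h | h
      · interval_cases hh : G.dist v u₀
        · exact absurd (hG.dist_eq_zero_iff.mp hh ▸ hu₀D) hvD
        · exact absurd (SimpleGraph.dist_eq_one_iff_adj.mp hh).symm (hvnadj u₀ hu₀D)
      · exact h
    omega
  have hlow : ∀ z ∈ D, 2 ≤ G.dist v z := by
    intro z hz
    rcases Nat.lt_or_ge (G.dist v z) 2 with h | h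
    · interval_cases hh : G.dist v z
      · exact absurd (hG.dist_eq_zero_iff.mp hh ▸ hz) hvD
      · exact absurd (SimpleGraph.dist_eq_one_iff_adj.mp hh).symm (hvnadj z hz)
    · exact h
  refine ⟨v, w, ?_, hvw.symm, ⟨u₀, hu₀D, hwu₀⟩, ?_, ?_, ?_⟩
  · -- sInf = 2
    apply le_antisymm
    · exact Nat.sInf_le ⟨u₀, hu₀D, hdist2⟩
    · exact le_csInf ⟨2, u₀, hu₀D, hdist2⟩ (by rintro d ⟨z, hz, rfl⟩; exact hlow z hz)
  · -- connectivity
    have hpair : (G.induce ({v, w} : Set V)).Connected :=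
      induce_pair_connected_of_adj hvw
    have hcu : IsConnSet G ((↑D : Set V) ∪ {v, w}) :=
      connected_induce_union hconn.preconnected hpair.preconnected hu₀D (by simp) hwu₀.symm
    have hset : (↑(D ∪ {v, w}) : Set V) = (↑D : Set V) ∪ {v, w} := by
      push_cast; rfl
    rw [IsConnSet, hset]
    exact hcu
  · -- independence
    have : _root_.IsIndepSet G (insert v (↑S : Set V)) := by
      haveI : Std.Symm (fun a b => ¬ G.Adj a b) :=
        ⟨fun a b (hab : ¬ G.Adj a b) (h : G.Adj b a) => hab h.symm⟩
      rw [_root_.IsIndepSet, Set.pairwise_insert_of_symm]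
      exact ⟨hindep, fun b hb _ h => hvnadj b (hSD hb) h.symm⟩
    simpa using this
  · -- cardinality
    rw [Finset.card_insert_of_notMem (fun hvS => hvD (hSD hvS))]
end
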